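/- Let χ : Kˣ → ℂˣ be a group homomorphism satisfying χ(c(x)) = χ(x) for all x ∈ Kˣ. Then there exists a group homomorphism μ : Fˣ → ℂˣ such that χ(x) = μ(N_{K/F}(x)) for all x ∈ Kˣ, and every such μ satisfies μ(y)² = χ(y) for all y ∈ Fˣ. (Existence of the character μ with χ = μ ∘ N_{K/F} and μ² = χ|_{Fˣ}, used to describe π⁺ when χ is Galois-invariant.) -/

import Mathlib

open Complex in
noncomputable instance : DivisibleBy (Additive ℂˣ) ℕ where
  div a n :=
    if h : n = 0 then 0 else
      Additive.ofMul (Units.mk0 (((a.toMul : ℂˣ) : ℂ) ^ ((n : ℂ)⁻¹))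
        (by
          simp only [Ne, cpow_eq_zero_iff, not_and_or]
          exact Or.inl (Units.ne_zero _)))
  div_zero a := by simp
  div_cancel {n} a hn := by
    show n • (if h : n = 0 then (0 : Additive ℂˣ) else Additive.ofMul (Units.mk0 (((a.toMul : ℂˣ) : ℂ) ^ ((n : ℂ)⁻¹)) (by simp only [Ne, Complex.cpow_eq_zero_iff, not_and_or]; exact Or.inl (Units.ne_zero _)))) = a
    rw [dif_neg hn]
    apply Additive.toMul.injective
    rw [toMul_nsmul]
    ext
    push_cast
    exact Complex.cpow_nat_inv_pow _ hn

noncomputable instance : DivisibleBy (Additive ℂˣ) ℤ :=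
  AddGroup.divisibleByIntOfDivisibleByNat _

noncomputable instance instDivULiftCU : DivisibleBy (ULift.{u} (Additive ℂˣ)) ℤ where
  div a n := ULift.up (DivisibleBy.div a.down n)
  div_zero a := congrArg ULift.up (DivisibleBy.div_zero a.down)
  div_cancel {n} a hn := by
    have : (n • ULift.up (DivisibleBy.div a.down n) : ULift (Additive ℂˣ)).down
        = n • DivisibleBy.div a.down n := rfl
    apply ULift.ext
    rw [this, DivisibleBy.div_cancel a.down hn]

lemma subgroup_hom_extend {G : Type u} [CommGroup G] (S : Subgroup G) (ν : S →* ℂˣ) :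
    ∃ μ : G →* ℂˣ, ∀ s : S, μ (s : G) = ν s := by
  let Q := ULift.{u} (Additive ℂˣ)
  have inj : Module.Injective ℤ Q := (Module.Baer.of_divisible Q).injective
  let f : Additive S →ₗ[ℤ] Additive G := (MonoidHom.toAdditive S.subtype).toIntLinearMap
  have hf : Function.Injective f := fun a b h => Subtype.ext_iff.mpr (congrArg Additive.toMul (congrArg Additive.ofMul (congrArg Additive.toMul h)))
  let g : Additive S →ₗ[ℤ] Q :=
    ((AddEquiv.ulift (α := Additive ℂˣ)).symm.toAddMonoidHom.comp
      (MonoidHom.toAdditive ν)).toIntLinearMap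
  obtain ⟨h, hh⟩ := inj.out f hf g
  refine ⟨MonoidHom.toAdditive.symm
    ((AddEquiv.ulift (α := Additive ℂˣ)).toAddMonoidHom.comp h.toAddMonoidHom), fun s => ?_⟩
  have := hh (Additive.ofMul s)
  have : (h (f (Additive.ofMul s))).down = (g (Additive.ofMul s)).down := by rw [this]
  exact this

/-- `F` and `K` are fields of characteristic zero, `K/F` is Galois of degree 2, and `c` is the
unique nontrivial element of `Gal(K/F)`; the norm is `N_{K/F}(x) = x · c x`.  If
`χ : Kˣ → ℂˣ` is a Galois-invariant group homomorphism, then there exists a group homomorphism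
`μ : Fˣ → ℂˣ` with `χ x = μ (N_{K/F} x)` for all `x ∈ Kˣ`, and every such `μ` satisfies
`μ(y)² = χ(y)` for all `y ∈ Fˣ` (with `Fˣ` viewed inside `Kˣ`). -/
theorem galois_invariant_char_factors_through_norm
    {F K : Type*} [Field F] [Field K] [CharZero F] [CharZero K]
    [Algebra F K] [IsGalois F K] (hdeg : Module.finrank F K = 2)
    (c : K ≃ₐ[F] K) (hc : c ≠ AlgEquiv.refl)
    (χ : Kˣ →* ℂˣ)
    (hχ : ∀ x : Kˣ, χ (Units.map (c : K →* K) x) = χ x) :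
    (∃ μ : Fˣ →* ℂˣ,
      ∀ (x : Kˣ) (y : Fˣ), algebraMap F K (y : F) = (x : K) * c (x : K) → χ x = μ y) ∧
    (∀ μ : Fˣ →* ℂˣ,
      (∀ (x : Kˣ) (y : Fˣ), algebraMap F K (y : F) = (x : K) * c (x : K) → χ x = μ y) →
      ∀ y : Fˣ, (μ y) ^ 2 = χ (Units.map (algebraMap F K : F →* K) y)) := by
  classical
  have hfd : FiniteDimensional F K := Module.finite_of_finrank_pos (by rw [hdeg]; norm_num)
  have hcard : Fintype.card (K ≃ₐ[F] K) = 2 := by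
    rw [← Nat.card_eq_fintype_card, IsGalois.card_aut_eq_finrank, hdeg]
  have hc1 : c ≠ (1 : K ≃ₐ[F] K) := hc
  have huniv : ∀ σ : K ≃ₐ[F] K, σ = 1 ∨ σ = c := by
    intro σ
    by_contra h
    push_neg at h
    have h3 : ({1, c, σ} : Finset (K ≃ₐ[F] K)).card = 3 := by
      rw [Finset.card_insert_of_notMem (by simp [Ne.symm hc1, Ne.symm h.1]),
        Finset.card_insert_of_notMem (by simp [Ne.symm h.2]), Finset.card_singleton]
    have := Finset.card_le_univ ({1, c, σ} : Finset (K ≃ₐ[F] K))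
    rw [h3, hcard] at this
    omega
  have hcc : c * c = 1 := by
    rcases huniv (c * c) with h | h
    · exact h
    · exact absurd (mul_right_cancel (a := c) (by rw [h, one_mul])) hc1
  have hU : (Finset.univ : Finset (K ≃ₐ[F] K)) = {1, c} := by
    symm
    apply Finset.eq_univ_of_card
    rw [Finset.card_insert_of_notMem (by simp [Ne.symm hc1]), Finset.card_singleton, hcard]
  have hnorm : ∀ x : K, algebraMap F K (Algebra.norm F x) = x * c x := by
    intro x
    rw [Algebra.norm_eq_prod_automorphisms, hU, Finset.prod_pair hc1.symm]
    rfl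
  set N : Kˣ →* Fˣ := Units.map (Algebra.norm F : K →* F) with hN
  have hNval : ∀ x : Kˣ, algebraMap F K ((N x : Fˣ) : F) = (x : K) * c (x : K) :=
    fun x => hnorm x
  have hker : ∀ x : Kˣ, (x : K) * c (x : K) = 1 → χ x = 1 := by
    intro x hx
    have hcx : c (x : K) * (x : K) = 1 := by rw [mul_comm]; exact hx
    set f : (K ≃ₐ[F] K) → Kˣ := fun σ => if σ = 1 then 1 else x with hfdef
    have hf : groupCohomology.IsMulCocycle₁ f := by
      intro g h
      rcases huniv g with hg | hg
      · subst hg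
        simp [hfdef, one_smul]
      · subst hg
        rcases huniv h with hh' | hh'
        · subst hh'
          simp [hfdef, hc1, AlgEquiv.smul_units_def]
        · subst hh'
          rw [hcc]
          simp only [hfdef, if_pos rfl, if_neg hc1]
          ext
          simpa [AlgEquiv.smul_units_def] using hcx.symm
    obtain ⟨β, hβ⟩ := groupCohomology.isMulCoboundary₁_of_isMulCocycle₁_of_aut_to_units f hf
    have hβc : c • β / β = x := by simpa [hfdef, hc1] using hβ c
    rw [← hβc, map_div, AlgEquiv.smul_units_def, hχ, div_self']
  have hkerle : ∀ x ∈ N.ker, χ x = 1 := by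
    intro x hx
    apply hker
    rw [MonoidHom.mem_ker] at hx
    rw [← hNval x, hx, Units.val_one, map_one]
  let e := QuotientGroup.quotientKerEquivRange N
  let ν : N.range →* ℂˣ := (QuotientGroup.lift N.ker χ hkerle).comp e.symm.toMonoidHom
  have hν : ∀ x : Kˣ, ν ⟨N x, ⟨x, rfl⟩⟩ = χ x := by
    intro x
    have h1 : e (QuotientGroup.mk x) = ⟨N x, ⟨x, rfl⟩⟩ := rfl
    have h2 : e.symm ⟨N x, ⟨x, rfl⟩⟩ = QuotientGroup.mk x := by
      rw [← h1, MulEquiv.symm_apply_apply]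
    simp only [ν, MonoidHom.comp_apply, MulEquiv.coe_toMonoidHom, h2]
    rfl
  obtain ⟨μ, hμ⟩ := subgroup_hom_extend N.range ν
  constructor
  · refine ⟨μ, fun x y hy => ?_⟩
    have hyN : y = N x := by
      apply Units.ext
      apply (algebraMap F K).injective
      rw [hy, hNval x]
    rw [hyN]
    exact ((hμ ⟨N x, ⟨x, rfl⟩⟩).trans (hν x)).symm
  · intro μ' hμ' y
    have hy : algebraMap F K ((y * y : Fˣ) : F)
        = ((Units.map (algebraMap F K : F →* K) y : Kˣ) : K)
          * c ((Units.map (algebraMap F K : F →* K) y : Kˣ) : K) := by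
      simp [AlgEquiv.commutes, map_mul]
    have h := hμ' (Units.map (algebraMap F K : F →* K) y) (y * y) hy
    rw [sq, ← map_mul μ']
    exact h.symm
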